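/- arXiv:1911.03767 — 2 statements merged into one kernel-verified Lean document; each statement's English description precedes it below -/
import Mathlib

section
/- Let X be a 2-based Banach space with polar parameterization p. Then at every point t ∈ ℝ the one-sided derivatives p'_−(t) = lim_{ε→0−}(p(t+ε) − p(t))/ε and p'_+(t) = lim_{ε→0+}(p(t+ε) − p(t))/ε exist, and the set {t ∈ ℝ : p'_−(t) ≠ p'_+(t)} is at most countable. -/
noncomputable section
open MeasureTheory Set Filter
open scoped ENNReal Topology

variable {X : Type*} [NormedAddCommGroup X] [NormedSpace ℝ X]

/-- `e^{it} = cos t • e₁ + sin t • e₂` for the basis `b 0, b 1`. -/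
def expV (b : Module.Basis (Fin 2) ℝ X) (t : ℝ) : X :=
  Real.cos t • b 0 + Real.sin t • b 1

/-- The polar parameterization `p(t) = e^{it}/‖e^{it}‖` of the unit sphere. -/
def polarParam (b : Module.Basis (Fin 2) ℝ X) (t : ℝ) : X :=
  ‖expV b t‖⁻¹ • expV b t

/-- The Euclidean norm `|x| = √(e₁*(x)² + e₂*(x)²)` associated to the basis. -/
def euclNorm (b : Module.Basis (Fin 2) ℝ X) (x : X) : ℝ :=
  Real.sqrt ((b.coord 0 x)^2 + (b.coord 1 x)^2)

/-- `c = min{‖x‖ : |x| = 1}`. -/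
def cConst (b : Module.Basis (Fin 2) ℝ X) : ℝ :=
  sInf (norm '' {x : X | euclNorm b x = 1})

/-- `C = max{‖x‖ : |x| = 1}`. -/
def CConst (b : Module.Basis (Fin 2) ℝ X) : ℝ :=
  sSup (norm '' {x : X | euclNorm b x = 1})

/-- The right derivative of a function `f : ℝ → X`. -/
def rightDeriv (f : ℝ → X) (t : ℝ) : X := derivWithin f (Ici t) t

/-- The left derivative of a function `f : ℝ → X`. -/
def leftDeriv (f : ℝ → X) (t : ℝ) : X := derivWithin f (Iic t) t

/-- The arc-length function `s(t) = ∫₀^t ‖p'₊(u)‖ du`. -/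
def arcLen (b : Module.Basis (Fin 2) ℝ X) (t : ℝ) : ℝ :=
  ∫ u in (0:ℝ)..t, ‖rightDeriv (polarParam b) u‖

/-- The half-length `L = s(π)` of the unit sphere. -/
def halfLen (b : Module.Basis (Fin 2) ℝ X) : ℝ := arcLen b Real.pi

/-- The inverse `t = s⁻¹` of the arc-length function. -/
def arcInv (b : Module.Basis (Fin 2) ℝ X) : ℝ → ℝ := Function.invFun (arcLen b)

/-- The natural parameterization `r = p ∘ t` of the unit sphere. -/
def natParam (b : Module.Basis (Fin 2) ℝ X) : ℝ → X := polarParam b ∘ arcInv b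

/-- Local absolute continuity of `f` with a.e. derivative `f'`, in the sense that `f` is
differentiable almost everywhere, `f'` is locally integrable, and `f` is recovered from `f'`
by integration. -/
def LocAC {E : Type*} [NormedAddCommGroup E] [NormedSpace ℝ E] [CompleteSpace E]
    (f f' : ℝ → E) : Prop :=
  (∀ᵐ t : ℝ, HasDerivAt f (f' t) t) ∧ LocallyIntegrable f' volume ∧
    ∀ a b : ℝ, a ≤ b → f b - f a = ∫ t in a..b, f' t

/-- `s` is a Lebesgue point of `g`. -/
def LebesguePoint {E : Type*} [NormedAddCommGroup E] (g : ℝ → E) (s : ℝ) : Prop :=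
  Tendsto (fun ε : ℝ => (1/ε) * ∫ t in (0:ℝ)..ε, ‖g (s + t) - g s‖) (𝓝[≠] (0:ℝ)) (𝓝 0)


namespace PolarAux
open Real


/-- Right derivative value of a convex function. -/
def rdF (F : ℝ → ℝ) (x : ℝ) : ℝ := sInf (slope F x '' Ioi x)
/-- Left derivative value of a convex function. -/
def ldF (F : ℝ → ℝ) (x : ℝ) : ℝ := sSup (slope F x '' Iio x)

variable {F : ℝ → ℝ}

lemma slope_mono_univ (hF : ConvexOn ℝ univ F) (x : ℝ) :
    MonotoneOn (slope F x) (univ \ {x}) := hF.slope_mono (mem_univ x)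

lemma bddBelow_slope (hF : ConvexOn ℝ univ F) (x : ℝ) :
    BddBelow (slope F x '' Ioi x) := by
  refine ⟨slope F x (x - 1), ?_⟩
  rintro _ ⟨y, hy, rfl⟩
  exact slope_mono_univ hF x ⟨mem_univ _, by simp⟩ ⟨mem_univ _, (ne_of_gt hy)⟩
    (by linarith [mem_Ioi.1 hy])

lemma bddAbove_slope (hF : ConvexOn ℝ univ F) (x : ℝ) :
    BddAbove (slope F x '' Iio x) := by
  refine ⟨slope F x (x + 1), ?_⟩
  rintro _ ⟨y, hy, rfl⟩
  exact slope_mono_univ hF x ⟨mem_univ _, (ne_of_lt hy)⟩ ⟨mem_univ _, by simp⟩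
    (by linarith [mem_Iio.1 hy])

lemma hasDerivWithinAt_Ici_rdF (hF : ConvexOn ℝ univ F) (x : ℝ) :
    HasDerivWithinAt F (rdF F x) (Ici x) x := by
  rw [hasDerivWithinAt_iff_tendsto_slope, Ici_sdiff_left]
  exact MonotoneOn.tendsto_nhdsGT
    ((slope_mono_univ hF x).mono (fun y hy => ⟨mem_univ _, ne_of_gt hy⟩))
    (bddBelow_slope hF x)

lemma hasDerivWithinAt_Iic_ldF (hF : ConvexOn ℝ univ F) (x : ℝ) :
    HasDerivWithinAt F (ldF F x) (Iic x) x := by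
  rw [hasDerivWithinAt_iff_tendsto_slope, Iic_sdiff_right]
  exact MonotoneOn.tendsto_nhdsLT
    ((slope_mono_univ hF x).mono (fun y hy => ⟨mem_univ _, ne_of_lt hy⟩))
    (bddAbove_slope hF x)

lemma ldF_le_rdF (hF : ConvexOn ℝ univ F) (x : ℝ) : ldF F x ≤ rdF F x := by
  refine csSup_le ⟨slope F x (x - 1), ⟨x - 1, by simp, rfl⟩⟩ ?_
  rintro _ ⟨u, hu, rfl⟩
  refine le_csInf ⟨slope F x (x + 1), ⟨x + 1, by simp, rfl⟩⟩ ?_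
  rintro _ ⟨v, hv, rfl⟩
  exact slope_mono_univ hF x ⟨mem_univ _, ne_of_lt hu⟩ ⟨mem_univ _, ne_of_gt hv⟩
    (le_of_lt ((mem_Iio.1 hu).trans (mem_Ioi.1 hv)))

lemma rdF_le_ldF (hF : ConvexOn ℝ univ F) {x y : ℝ} (hxy : x < y) :
    rdF F x ≤ ldF F y := by
  set m := (x + y) / 2 with hm
  have hxm : x < m := by simp only [hm]; linarith
  have hmy : m < y := by simp only [hm]; linarith
  calc rdF F x ≤ slope F x m := csInf_le (bddBelow_slope hF x) ⟨m, hxm, rfl⟩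
    _ = slope F m x := slope_comm F x m
    _ ≤ slope F m y := slope_mono_univ hF m ⟨mem_univ _, ne_of_lt hxm⟩
        ⟨mem_univ _, by exact ne_of_gt hmy⟩ (by linarith)
    _ = slope F y m := slope_comm F m y
    _ ≤ ldF F y := le_csSup (bddAbove_slope hF y) ⟨m, hmy, rfl⟩

lemma countable_kinks (hF : ConvexOn ℝ univ F) :
    {x : ℝ | ldF F x ≠ rdF F x}.Countable := by
  have hsub : {x : ℝ | ldF F x ≠ rdF F x} ⊆
      ⋃ q : ℚ, {x : ℝ | ldF F x < (q : ℝ) ∧ (q : ℝ) < rdF F x} := by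
    intro x hx
    obtain ⟨q, h1, h2⟩ := exists_rat_btwn (lt_of_le_of_ne (ldF_le_rdF hF x) hx)
    exact mem_iUnion.2 ⟨q, h1, h2⟩
  refine Set.Countable.mono hsub (Set.countable_iUnion fun q => Set.Subsingleton.countable ?_)
  intro x hx y hy
  by_contra hne
  rcases lt_or_gt_of_ne hne with h | h
  · exact absurd ((hx.2.trans_le (rdF_le_ldF hF h)).trans hy.1) (lt_irrefl _)
  · exact absurd ((hy.2.trans_le (rdF_le_ldF hF h)).trans hx.1) (lt_irrefl _)

variable (b : Module.Basis (Fin 2) ℝ X)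

lemma expV_ne_zero (t : ℝ) : expV b t ≠ 0 := by
  intro h
  have h0 : Real.cos t = 0 := by
    have := congrArg (b.coord 0) h
    simpa [expV, map_add, _root_.map_smul, Module.Basis.coord_apply, Module.Basis.repr_self,
      Finsupp.single_apply] using this
  have h1 : Real.sin t = 0 := by
    have := congrArg (b.coord 1) h
    simpa [expV, map_add, _root_.map_smul, Module.Basis.coord_apply, Module.Basis.repr_self,
      Finsupp.single_apply] using this
  have := Real.sin_sq_add_cos_sq t
  rw [h0, h1] at this
  norm_num at this

lemma norm_expV_pos (t : ℝ) : 0 < ‖expV b t‖ :=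
  norm_pos_iff.2 (expV_ne_zero b t)

lemma hasDerivAt_expV (t : ℝ) : HasDerivAt (expV b) (expV b (t + π / 2)) t := by
  have h := ((Real.hasDerivAt_cos t).smul_const (b 0)).add
    ((Real.hasDerivAt_sin t).smul_const (b 1))
  convert h using 1
  · rfl
  simp [expV, Real.cos_add_pi_div_two, Real.sin_add_pi_div_two]

lemma expV_add_eq (t₀ ε : ℝ) :
    expV b (t₀ + ε) = Real.cos ε • expV b t₀ + Real.sin ε • expV b (t₀ + π / 2) := by
  simp only [expV, Real.cos_add_pi_div_two, Real.sin_add_pi_div_two,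
    Real.cos_add, Real.sin_add, Real.cos_pi_div_two, Real.sin_pi_div_two]
  match_scalars <;> ring

/-- The convex "chart" function. -/
def Fc (t₀ : ℝ) : ℝ → ℝ := fun s => ‖expV b t₀ + s • expV b (t₀ + π / 2)‖

lemma convexOn_Fc (t₀ : ℝ) : ConvexOn ℝ univ (Fc b t₀) := by
  refine ⟨convex_univ, fun s _ u _ a c ha hc hac => ?_⟩
  have key : expV b t₀ + (a * s + c * u) • expV b (t₀ + π / 2) =
      a • (expV b t₀ + s • expV b (t₀ + π / 2)) +
      c • (expV b t₀ + u • expV b (t₀ + π / 2)) := by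
    match_scalars
    · linarith
    · ring
  simp only [Fc, smul_eq_mul, key]
  calc ‖a • (expV b t₀ + s • expV b (t₀ + π / 2)) +
      c • (expV b t₀ + u • expV b (t₀ + π / 2))‖
      ≤ ‖a • (expV b t₀ + s • expV b (t₀ + π / 2))‖ +
        ‖c • (expV b t₀ + u • expV b (t₀ + π / 2))‖ := norm_add_le _ _
    _ = a * ‖expV b t₀ + s • expV b (t₀ + π / 2)‖ +
        c * ‖expV b t₀ + u • expV b (t₀ + π / 2)‖ := by
        rw [norm_smul, norm_smul, Real.norm_eq_abs, Real.norm_eq_abs,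
          abs_of_nonneg ha, abs_of_nonneg hc]

lemma chart_eq {t₀ ε : ℝ} (hc : 0 < Real.cos ε) :
    ‖expV b (t₀ + ε)‖ = Real.cos ε * Fc b t₀ (Real.tan ε) := by
  rw [expV_add_eq]
  have : Real.cos ε • expV b t₀ + Real.sin ε • expV b (t₀ + π / 2) =
      Real.cos ε • (expV b t₀ + Real.tan ε • expV b (t₀ + π / 2)) := by
    rw [smul_add, smul_smul, Real.tan_eq_sin_div_cos, mul_comm,
      div_mul_cancel₀ _ hc.ne']
  rw [this, norm_smul, Real.norm_eq_abs, abs_of_pos hc, Fc]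

variable {E : Type*} [NormedAddCommGroup E] [NormedSpace ℝ E]

lemma unshift_Ici {f : ℝ → E} {l : E} {t₀ ε₀ : ℝ}
    (h : HasDerivWithinAt (fun ε => f (t₀ + ε)) l (Ici ε₀) ε₀) :
    HasDerivWithinAt f l (Ici (t₀ + ε₀)) (t₀ + ε₀) := by
  have hsub : HasDerivWithinAt (fun u : ℝ => u - t₀) 1 (Ici (t₀ + ε₀)) (t₀ + ε₀) :=
    ((hasDerivAt_id _).sub_const t₀).hasDerivWithinAt
  have h' : HasDerivWithinAt (fun ε => f (t₀ + ε)) l (Ici ε₀) ((t₀ + ε₀) - t₀) := by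
    rwa [add_sub_cancel_left]
  have hmap : MapsTo (fun u : ℝ => u - t₀) (Ici (t₀ + ε₀)) (Ici ε₀) := fun u hu => by
    simp only [mem_Ici] at *; linarith
  have hc := h'.scomp (t₀ + ε₀) hsub hmap
  simp only [one_smul] at hc
  exact hc.congr (fun u _ => by simp [Function.comp]) (by simp [Function.comp])

lemma unshift_Iic {f : ℝ → E} {l : E} {t₀ ε₀ : ℝ}
    (h : HasDerivWithinAt (fun ε => f (t₀ + ε)) l (Iic ε₀) ε₀) :
    HasDerivWithinAt f l (Iic (t₀ + ε₀)) (t₀ + ε₀) := by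
  have hsub : HasDerivWithinAt (fun u : ℝ => u - t₀) 1 (Iic (t₀ + ε₀)) (t₀ + ε₀) :=
    ((hasDerivAt_id _).sub_const t₀).hasDerivWithinAt
  have h' : HasDerivWithinAt (fun ε => f (t₀ + ε)) l (Iic ε₀) ((t₀ + ε₀) - t₀) := by
    rwa [add_sub_cancel_left]
  have hmap : MapsTo (fun u : ℝ => u - t₀) (Iic (t₀ + ε₀)) (Iic ε₀) := fun u hu => by
    simp only [mem_Iic] at *; linarith
  have hc := h'.scomp (t₀ + ε₀) hsub hmap
  simp only [one_smul] at hc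
  exact hc.congr (fun u _ => by simp [Function.comp]) (by simp [Function.comp])


variable (b : Module.Basis (Fin 2) ℝ X)

/-- `gN b t = ‖e^{it}‖`. -/
def gN : ℝ → ℝ := fun t => ‖expV b t‖

lemma mem_Ioo_pi_div_two {ε : ℝ} (hε : ε ∈ Ioo (-(π/4)) (π/4)) :
    ε ∈ Ioo (-(π/2)) (π/2) := by
  have hpi := Real.pi_pos
  exact ⟨by linarith [hε.1], by linarith [hε.2]⟩

lemma gN_hasDerivWithinAt_Ici (t₀ : ℝ) {ε₀ : ℝ} (hε : ε₀ ∈ Ioo (-(π/4)) (π/4)) :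
    HasDerivWithinAt (gN b)
      (-Real.sin ε₀ * Fc b t₀ (Real.tan ε₀) +
        Real.cos ε₀ * (rdF (Fc b t₀) (Real.tan ε₀) * (1 / Real.cos ε₀ ^ 2)))
      (Ici (t₀ + ε₀)) (t₀ + ε₀) := by
  set s : Set ℝ := Ici ε₀ ∩ Ioo (-(π/4)) (π/4) with hs
  have hcos : ∀ ε ∈ Ioo (-(π/4):ℝ) (π/4), 0 < Real.cos ε := fun ε h =>
    Real.cos_pos_of_mem_Ioo (mem_Ioo_pi_div_two h)
  have hF : HasDerivWithinAt (Fc b t₀) (rdF (Fc b t₀) (Real.tan ε₀))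
      (Ici (Real.tan ε₀)) (Real.tan ε₀) :=
    hasDerivWithinAt_Ici_rdF (convexOn_Fc b t₀) _
  have htan : HasDerivWithinAt Real.tan (1 / Real.cos ε₀ ^ 2) s ε₀ :=
    (Real.hasDerivAt_tan (hcos ε₀ hε).ne').hasDerivWithinAt
  have hmap : MapsTo Real.tan s (Ici (Real.tan ε₀)) := by
    intro ε hεs
    exact mem_Ici.2 (Real.strictMonoOn_tan.monotoneOn (mem_Ioo_pi_div_two hε)
      (mem_Ioo_pi_div_two hεs.2) hεs.1)
  have hcomp := hF.comp ε₀ htan hmap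
  have hmul := ((Real.hasDerivAt_cos ε₀).hasDerivWithinAt (s := s)).mul hcomp
  have hcongr : HasDerivWithinAt (fun ε => gN b (t₀ + ε))
      (-Real.sin ε₀ * Fc b t₀ (Real.tan ε₀) +
        Real.cos ε₀ * (rdF (Fc b t₀) (Real.tan ε₀) * (1 / Real.cos ε₀ ^ 2))) s ε₀ := by
    refine (hmul.congr (fun ε hεs => chart_eq b (hcos ε hεs.2)) (chart_eq b (hcos ε₀ hε))).congr_deriv ?_
    simp [Function.comp]
  have hmem : s ∈ 𝓝[Ici ε₀] ε₀ :=
    inter_mem self_mem_nhdsWithin (mem_nhdsWithin_of_mem_nhds (isOpen_Ioo.mem_nhds hε))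
  exact unshift_Ici (hcongr.mono_of_mem_nhdsWithin hmem)

lemma gN_hasDerivWithinAt_Iic (t₀ : ℝ) {ε₀ : ℝ} (hε : ε₀ ∈ Ioo (-(π/4)) (π/4)) :
    HasDerivWithinAt (gN b)
      (-Real.sin ε₀ * Fc b t₀ (Real.tan ε₀) +
        Real.cos ε₀ * (ldF (Fc b t₀) (Real.tan ε₀) * (1 / Real.cos ε₀ ^ 2)))
      (Iic (t₀ + ε₀)) (t₀ + ε₀) := by
  set s : Set ℝ := Iic ε₀ ∩ Ioo (-(π/4)) (π/4) with hs
  have hcos : ∀ ε ∈ Ioo (-(π/4):ℝ) (π/4), 0 < Real.cos ε := fun ε h =>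
    Real.cos_pos_of_mem_Ioo (mem_Ioo_pi_div_two h)
  have hF : HasDerivWithinAt (Fc b t₀) (ldF (Fc b t₀) (Real.tan ε₀))
      (Iic (Real.tan ε₀)) (Real.tan ε₀) :=
    hasDerivWithinAt_Iic_ldF (convexOn_Fc b t₀) _
  have htan : HasDerivWithinAt Real.tan (1 / Real.cos ε₀ ^ 2) s ε₀ :=
    (Real.hasDerivAt_tan (hcos ε₀ hε).ne').hasDerivWithinAt
  have hmap : MapsTo Real.tan s (Iic (Real.tan ε₀)) := by
    intro ε hεs
    exact mem_Iic.2 (Real.strictMonoOn_tan.monotoneOn (mem_Ioo_pi_div_two hεs.2)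
      (mem_Ioo_pi_div_two hε) hεs.1)
  have hcomp := hF.comp ε₀ htan hmap
  have hmul := ((Real.hasDerivAt_cos ε₀).hasDerivWithinAt (s := s)).mul hcomp
  have hcongr : HasDerivWithinAt (fun ε => gN b (t₀ + ε))
      (-Real.sin ε₀ * Fc b t₀ (Real.tan ε₀) +
        Real.cos ε₀ * (ldF (Fc b t₀) (Real.tan ε₀) * (1 / Real.cos ε₀ ^ 2))) s ε₀ := by
    refine (hmul.congr (fun ε hεs => chart_eq b (hcos ε hεs.2)) (chart_eq b (hcos ε₀ hε))).congr_deriv ?_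
    simp [Function.comp]
  have hmem : s ∈ 𝓝[Iic ε₀] ε₀ :=
    inter_mem self_mem_nhdsWithin (mem_nhdsWithin_of_mem_nhds (isOpen_Ioo.mem_nhds hε))
  exact unshift_Iic (hcongr.mono_of_mem_nhdsWithin hmem)


lemma kink_transfer (b : Module.Basis (Fin 2) ℝ X) (t₀ : ℝ) {ε₀ : ℝ} (hε : ε₀ ∈ Ioo (-(π/4)) (π/4))
    (h : derivWithin (gN b) (Iic (t₀ + ε₀)) (t₀ + ε₀) ≠
      derivWithin (gN b) (Ici (t₀ + ε₀)) (t₀ + ε₀)) :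
    ldF (Fc b t₀) (Real.tan ε₀) ≠ rdF (Fc b t₀) (Real.tan ε₀) := by
  intro heq
  have hR := (gN_hasDerivWithinAt_Ici b t₀ hε).derivWithin (uniqueDiffOn_Ici _ _ self_mem_Ici)
  have hL := (gN_hasDerivWithinAt_Iic b t₀ hε).derivWithin (uniqueDiffOn_Iic _ _ self_mem_Iic)
  exact h (by rw [hL, hR, heq])

lemma countable_kinks_gN (b : Module.Basis (Fin 2) ℝ X) :
    {t : ℝ | derivWithin (gN b) (Iic t) t ≠ derivWithin (gN b) (Ici t) t}.Countable := by
  set K := {t : ℝ | derivWithin (gN b) (Iic t) t ≠ derivWithin (gN b) (Ici t) t} with hK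
  have hpi := Real.pi_pos
  have hcover : K ⊆ ⋃ k : ℤ, K ∩ Ioo ((k : ℝ) * (π/4) - π/4) ((k : ℝ) * (π/4) + π/4) := by
    intro t ht
    refine mem_iUnion.2 ⟨round (t / (π/4)), ht, ?_, ?_⟩
    · have h1 := abs_sub_round (t / (π/4))
      rw [abs_le] at h1
      have h3 : (0:ℝ) < π/4 := by linarith
      have h4 : ((round (t / (π/4)) : ℝ) - 1/2) * (π/4) ≤ t := by
        rw [← le_div_iff₀ h3]; linarith [h1.1]
      nlinarith
    · have h1 := abs_sub_round (t / (π/4))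
      rw [abs_le] at h1
      have h3 : (0:ℝ) < π/4 := by linarith
      have h4 : t ≤ ((round (t / (π/4)) : ℝ) + 1/2) * (π/4) := by
        rw [← div_le_iff₀ h3]; linarith [h1.2]
      nlinarith
  refine Set.Countable.mono hcover (Set.countable_iUnion fun k => ?_)
  set t₀ : ℝ := (k : ℝ) * (π/4) with ht₀
  have hinj : InjOn (fun t => Real.tan (t - t₀)) (Ioo (t₀ - π/4) (t₀ + π/4)) := by
    intro u hu v hv huv
    have hu' : u - t₀ ∈ Ioo (-(π/2)) (π/2) := ⟨by linarith [hu.1], by linarith [hu.2]⟩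
    have hv' : v - t₀ ∈ Ioo (-(π/2)) (π/2) := ⟨by linarith [hv.1], by linarith [hv.2]⟩
    have := Real.strictMonoOn_tan.injOn hu' hv' huv
    linarith
  refine countable_of_injective_of_countable_image (hinj.mono inter_subset_right) ?_
  refine Set.Countable.mono ?_ (countable_kinks (convexOn_Fc b t₀))
  rintro _ ⟨t, ⟨ht, htI⟩, rfl⟩
  have hεm : t - t₀ ∈ Ioo (-(π/4)) (π/4) := ⟨by linarith [htI.1], by linarith [htI.2]⟩
  have heq : t₀ + (t - t₀) = t := by ring
  refine kink_transfer b t₀ hεm ?_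
  rw [heq]
  exact ht

lemma pi_quarter_mem : (0:ℝ) ∈ Ioo (-(π/4)) (π/4) := by
  have := Real.pi_pos; constructor <;> simp <;> linarith

lemma gN_right (b : Module.Basis (Fin 2) ℝ X) (t : ℝ) :
    HasDerivWithinAt (gN b) (rdF (Fc b t) 0) (Ici t) t := by
  have h := gN_hasDerivWithinAt_Ici b t pi_quarter_mem
  simpa using h

lemma gN_left (b : Module.Basis (Fin 2) ℝ X) (t : ℝ) :
    HasDerivWithinAt (gN b) (ldF (Fc b t) 0) (Iic t) t := by
  have h := gN_hasDerivWithinAt_Iic b t pi_quarter_mem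
  simpa using h

lemma polar_right (b : Module.Basis (Fin 2) ℝ X) (t : ℝ) {l : ℝ}
    (hg : HasDerivWithinAt (gN b) l (Ici t) t) :
    HasDerivWithinAt (polarParam b)
      ((gN b t)⁻¹ • expV b (t + π/2) + (-l / gN b t ^ 2) • expV b t) (Ici t) t := by
  have hinv := hg.inv (norm_expV_pos b t).ne'
  exact hinv.smul ((hasDerivAt_expV b t).hasDerivWithinAt (s := Ici t))

lemma polar_left (b : Module.Basis (Fin 2) ℝ X) (t : ℝ) {l : ℝ}
    (hg : HasDerivWithinAt (gN b) l (Iic t) t) :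
    HasDerivWithinAt (polarParam b)
      ((gN b t)⁻¹ • expV b (t + π/2) + (-l / gN b t ^ 2) • expV b t) (Iic t) t := by
  have hinv := hg.inv (norm_expV_pos b t).ne'
  exact hinv.smul ((hasDerivAt_expV b t).hasDerivWithinAt (s := Iic t))

end PolarAux

/-- The polar parameterization has one-sided derivatives at every point, and the set of points
where the two one-sided derivatives differ is at most countable. -/


theorem polarParam_oneSided_deriv [CompleteSpace X] (b : Module.Basis (Fin 2) ℝ X) :
    (∀ t : ℝ, (∃ l : X, HasDerivWithinAt (polarParam b) l (Iic t) t) ∧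
      (∃ l : X, HasDerivWithinAt (polarParam b) l (Ici t) t)) ∧
    Set.Countable {t : ℝ | leftDeriv (polarParam b) t ≠ rightDeriv (polarParam b) t} := by
  constructor
  · intro t
    exact ⟨⟨_, PolarAux.polar_left b t (PolarAux.gN_left b t)⟩,
      ⟨_, PolarAux.polar_right b t (PolarAux.gN_right b t)⟩⟩
  · refine Set.Countable.mono ?_ (PolarAux.countable_kinks_gN b)
    intro t ht
    simp only [mem_setOf_eq] at ht ⊢
    by_contra hg
    apply ht
    have hLg : derivWithin (PolarAux.gN b) (Iic t) t = PolarAux.ldF (PolarAux.Fc b t) 0 :=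
      (PolarAux.gN_left b t).derivWithin (uniqueDiffOn_Iic _ _ self_mem_Iic)
    have hRg : derivWithin (PolarAux.gN b) (Ici t) t = PolarAux.rdF (PolarAux.Fc b t) 0 :=
      (PolarAux.gN_right b t).derivWithin (uniqueDiffOn_Ici _ _ self_mem_Ici)
    have heq : PolarAux.ldF (PolarAux.Fc b t) 0 = PolarAux.rdF (PolarAux.Fc b t) 0 := by
      rw [← hLg, ← hRg, hg]
    have hpL := (PolarAux.polar_left b t (PolarAux.gN_left b t)).derivWithin
      (uniqueDiffOn_Iic _ _ self_mem_Iic)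
    have hpR := (PolarAux.polar_right b t (PolarAux.gN_right b t)).derivWithin
      (uniqueDiffOn_Ici _ _ self_mem_Ici)
    unfold leftDeriv rightDeriv
    rw [hpL, hpR, heq]


end
end

section
/- Let X be a 2-based Banach space with polar parameterization p and constants c, C. Let t, u, α, β ∈ ℝ be such that p is differentiable at t and at u, p'(t) = λ·p(u) for some real λ > 0, and p'(u)/|p'(u)| = α·p(u)/|p(u)| + β·p(t)/|p(t)| (where |·| is the associated Euclidean norm). Then |α| ≤ ((C + c)/c)·|β|. -/
noncomputable section
open MeasureTheory Set Filter
open scoped ENNReal Topology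

variable {X : Type*} [NormedAddCommGroup X] [NormedSpace ℝ X]

section helpers

lemma tangent_bound {p : ℝ → X} {v : X} {s a : ℝ} {w : X}
    (hp : ∀ x, ‖p x‖ = 1) (hd : HasDerivAt p v s) (hv : v = a • p s + w) :
    |a| ≤ ‖w‖ := by
  have hslope : Tendsto (slope p s) (𝓝[≠] s) (𝓝 v) := hasDerivAt_iff_tendsto_slope.mp hd
  have hlim : Tendsto (fun x => ‖w‖ + ‖slope p s x - v‖) (𝓝[≠] s) (𝓝 ‖w‖) := by
    have h1 : Tendsto (fun x => slope p s x - v) (𝓝[≠] s) (𝓝 (v - v)) :=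
      hslope.sub tendsto_const_nhds
    have := (tendsto_const_nhds : Tendsto (fun _ : ℝ => ‖w‖) (𝓝[≠] s) (𝓝 ‖w‖)).add h1.norm
    simpa using this
  have key : ∀ x : ℝ, x ≠ s → (x - s) * a ≤ |x - s| * (‖w‖ + ‖slope p s x - v‖) := by
    intro x hx
    have hxs : (x - s) ≠ 0 := sub_ne_zero.mpr hx
    have hpx : p x = p s + (x - s) • slope p s x := by
      rw [slope_def_module, smul_smul, mul_inv_cancel₀ hxs, one_smul]
      abel
    have h1 : 1 + (x - s) * a - |x - s| * ‖w‖ ≤ ‖p s + (x - s) • v‖ := by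
      have hdecomp : p s + (x - s) • v = (1 + (x - s) * a) • p s + (x - s) • w := by
        rw [hv]; module
      have hA : ‖(1 + (x - s) * a) • p s‖ = |1 + (x - s) * a| := by
        rw [norm_smul, hp s, Real.norm_eq_abs, mul_one]
      have hB : ‖(x - s) • w‖ = |x - s| * ‖w‖ := by rw [norm_smul, Real.norm_eq_abs]
      have htri : ‖(1 + (x - s) * a) • p s‖ - ‖(x - s) • w‖ ≤
          ‖(1 + (x - s) * a) • p s + (x - s) • w‖ := by
        have := norm_add_le ((1 + (x - s) * a) • p s + (x - s) • w) (-((x - s) • w))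
        simp only [add_neg_cancel_right, norm_neg] at this
        linarith
      rw [hdecomp]
      have habs : 1 + (x - s) * a ≤ |1 + (x - s) * a| := le_abs_self _
      rw [hA, hB] at htri
      linarith
    have h2 : ‖p s + (x - s) • v‖ ≤ 1 + |x - s| * ‖slope p s x - v‖ := by
      have hdiff : p s + (x - s) • v - p x = (x - s) • (v - slope p s x) := by
        rw [hpx]; module
      have := norm_add_le (p x) (p s + (x - s) • v - p x)
      simp only [add_sub_cancel] at this
      rw [hp x, hdiff, norm_smul, Real.norm_eq_abs, norm_sub_rev] at this
      linarith
    linarith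
  rw [abs_le]
  constructor
  · have hmono : 𝓝[<] s ≤ 𝓝[≠] s := nhdsWithin_mono s (fun x hx => ne_of_lt hx)
    have h : -a ≤ ‖w‖ := by
      refine ge_of_tendsto (hlim.mono_left hmono) ?_
      filter_upwards [self_mem_nhdsWithin] with x hx
      have hxs : x - s < 0 := sub_neg.mpr hx
      have hk := key x (ne_of_lt hx)
      rw [abs_of_neg hxs] at hk
      have hpos : 0 < s - x := by linarith
      nlinarith
    linarith
  · have hmono : 𝓝[>] s ≤ 𝓝[≠] s := nhdsWithin_mono s (fun x hx => ne_of_gt hx)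
    refine ge_of_tendsto (hlim.mono_left hmono) ?_
    filter_upwards [self_mem_nhdsWithin] with x hx
    have hxs : 0 < x - s := sub_pos.mpr hx
    have hk := key x (ne_of_gt hx)
    rw [abs_of_pos hxs] at hk
    nlinarith

lemma euclNorm_nonneg (b : Module.Basis (Fin 2) ℝ X) (x : X) : 0 ≤ euclNorm b x := Real.sqrt_nonneg _

lemma euclNorm_smul (b : Module.Basis (Fin 2) ℝ X) (r : ℝ) (x : X) :
    euclNorm b (r • x) = |r| * euclNorm b x := by
  unfold euclNorm
  rw [_root_.map_smul, _root_.map_smul]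
  rw [← Real.sqrt_sq_eq_abs, ← Real.sqrt_mul (sq_nonneg r)]
  congr 1
  simp [smul_eq_mul]
  ring

lemma euclNorm_pos (b : Module.Basis (Fin 2) ℝ X) {x : X} (hx : x ≠ 0) : 0 < euclNorm b x := by
  rcases lt_or_eq_of_le (euclNorm_nonneg b x) with h | h
  · exact h
  · exfalso
    have h0 : (b.coord 0 x)^2 + (b.coord 1 x)^2 = 0 := by
      have hle := Real.sqrt_eq_zero'.mp h.symm
      nlinarith [sq_nonneg (b.coord 0 x), sq_nonneg (b.coord 1 x)]
    have hc0 : b.coord 0 x = 0 := by nlinarith [sq_nonneg (b.coord 0 x), sq_nonneg (b.coord 1 x)]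
    have hc1 : b.coord 1 x = 0 := by nlinarith [sq_nonneg (b.coord 0 x), sq_nonneg (b.coord 1 x)]
    apply hx
    have : ∀ i, b.repr x i = 0 := by
      intro i
      fin_cases i
      · exact hc0
      · exact hc1
    have hrepr : b.repr x = 0 := Finsupp.ext fun i => this i
    simpa [hrepr] using (b.repr.symm_apply_apply x).symm

lemma abs_coord_le (b : Module.Basis (Fin 2) ℝ X) (x : X) (i : Fin 2) :
    |b.coord i x| ≤ euclNorm b x := by
  fin_cases i
  · show |b.coord 0 x| ≤ _
    rw [← Real.sqrt_sq_eq_abs]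
    apply Real.sqrt_le_sqrt
    nlinarith [sq_nonneg (b.coord 1 x)]
  · show |b.coord 1 x| ≤ _
    rw [← Real.sqrt_sq_eq_abs]
    apply Real.sqrt_le_sqrt
    nlinarith [sq_nonneg (b.coord 0 x)]

lemma norm_le_K_euclNorm (b : Module.Basis (Fin 2) ℝ X) (x : X) :
    ‖x‖ ≤ (‖b 0‖ + ‖b 1‖) * euclNorm b x := by
  have hx : x = b.coord 0 x • b 0 + b.coord 1 x • b 1 := by
    have := b.sum_repr x
    rw [Fin.sum_univ_two] at this
    simp only [Module.Basis.coord_apply]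
    exact this.symm
  calc ‖x‖ = ‖b.coord 0 x • b 0 + b.coord 1 x • b 1‖ := by rw [← hx]
    _ ≤ ‖b.coord 0 x • b 0‖ + ‖b.coord 1 x • b 1‖ := norm_add_le _ _
    _ = |b.coord 0 x| * ‖b 0‖ + |b.coord 1 x| * ‖b 1‖ := by
        rw [norm_smul, norm_smul, Real.norm_eq_abs, Real.norm_eq_abs]
    _ ≤ euclNorm b x * ‖b 0‖ + euclNorm b x * ‖b 1‖ := by
        gcongr <;> [exact abs_coord_le b x 0; exact abs_coord_le b x 1]
    _ = (‖b 0‖ + ‖b 1‖) * euclNorm b x := by ring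

lemma euclNorm_le_K_norm (b : Module.Basis (Fin 2) ℝ X) :
    ∃ K : ℝ, 0 < K ∧ ∀ x : X, euclNorm b x ≤ K * ‖x‖ := by
  have : FiniteDimensional ℝ X := Module.Basis.finiteDimensional_of_finite b
  set f0 := LinearMap.toContinuousLinearMap (b.coord 0)
  set f1 := LinearMap.toContinuousLinearMap (b.coord 1)
  refine ⟨‖f0‖ + ‖f1‖ + 1, by positivity, fun x => ?_⟩
  have h0 : |b.coord 0 x| ≤ ‖f0‖ * ‖x‖ := by simpa [f0] using f0.le_opNorm x
  have h1 : |b.coord 1 x| ≤ ‖f1‖ * ‖x‖ := by simpa [f1] using f1.le_opNorm x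
  have hsq : euclNorm b x ≤ |b.coord 0 x| + |b.coord 1 x| := by
    unfold euclNorm
    have h2 : (b.coord 0 x)^2 + (b.coord 1 x)^2 ≤ (|b.coord 0 x| + |b.coord 1 x|)^2 := by
      nlinarith [sq_abs (b.coord 0 x), sq_abs (b.coord 1 x),
        mul_nonneg (abs_nonneg (b.coord 0 x)) (abs_nonneg (b.coord 1 x))]
    calc Real.sqrt ((b.coord 0 x)^2 + (b.coord 1 x)^2)
        ≤ Real.sqrt ((|b.coord 0 x| + |b.coord 1 x|)^2) := Real.sqrt_le_sqrt h2
      _ = |b.coord 0 x| + |b.coord 1 x| := Real.sqrt_sq (by positivity)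
  nlinarith [norm_nonneg x]

lemma euclNorm_basis0 (b : Module.Basis (Fin 2) ℝ X) : euclNorm b (b 0) = 1 := by
  unfold euclNorm
  simp [Module.Basis.coord_apply, Module.Basis.repr_self, Finsupp.single_eq_same,
    Finsupp.single_eq_of_ne (by decide : (0 : Fin 2) ≠ 1)]

lemma bddAbove_norms (b : Module.Basis (Fin 2) ℝ X) :
    BddAbove (norm '' {x : X | euclNorm b x = 1}) := by
  refine ⟨‖b 0‖ + ‖b 1‖, ?_⟩
  rintro _ ⟨z, hz, rfl⟩
  have := norm_le_K_euclNorm b z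
  rw [hz, mul_one] at this
  exact this

lemma cConst_le_norm (b : Module.Basis (Fin 2) ℝ X) {y : X} (hy : euclNorm b y = 1) :
    cConst b ≤ ‖y‖ :=
  csInf_le ⟨0, by rintro _ ⟨z, hz, rfl⟩; positivity⟩ ⟨y, hy, rfl⟩

lemma norm_le_CConst (b : Module.Basis (Fin 2) ℝ X) {y : X} (hy : euclNorm b y = 1) :
    ‖y‖ ≤ CConst b :=
  le_csSup (bddAbove_norms b) ⟨y, hy, rfl⟩

lemma cConst_pos (b : Module.Basis (Fin 2) ℝ X) : 0 < cConst b := by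
  obtain ⟨K, hK, hKle⟩ := euclNorm_le_K_norm b
  have hlb : ∀ z ∈ norm '' {x : X | euclNorm b x = 1}, K⁻¹ ≤ z := by
    rintro _ ⟨z, hz, rfl⟩
    have := hKle z
    rw [hz] at this
    nlinarith [mul_inv_cancel₀ hK.ne', inv_nonneg.mpr hK.le]
  have hne : (norm '' {x : X | euclNorm b x = 1}).Nonempty := ⟨‖b 0‖, b 0, euclNorm_basis0 b, rfl⟩
  calc (0:ℝ) < K⁻¹ := by positivity
    _ ≤ cConst b := le_csInf hne hlb

lemma expV_ne_zero (b : Module.Basis (Fin 2) ℝ X) (s : ℝ) : expV b s ≠ 0 := by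
  intro h
  have h0 : b.coord 0 (expV b s) = Real.cos s := by
    simp [expV, map_add, _root_.map_smul, Module.Basis.coord_apply, Module.Basis.repr_self,
      Finsupp.single_eq_same, Finsupp.single_eq_of_ne (by decide : (1 : Fin 2) ≠ 0)]
  rw [h] at h0
  have h1 : b.coord 1 (expV b s) = Real.sin s := by
    simp [expV, map_add, _root_.map_smul, Module.Basis.coord_apply, Module.Basis.repr_self,
      Finsupp.single_eq_same, Finsupp.single_eq_of_ne (by decide : (0 : Fin 2) ≠ 1)]
  rw [h] at h1
  simp at h0 h1
  nlinarith [Real.sin_sq_add_cos_sq s]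

lemma norm_polarParam (b : Module.Basis (Fin 2) ℝ X) (s : ℝ) : ‖polarParam b s‖ = 1 := by
  unfold polarParam
  rw [norm_smul, Real.norm_eq_abs, abs_of_pos (inv_pos.mpr (norm_pos_iff.mpr (expV_ne_zero b s)))]
  exact inv_mul_cancel₀ (norm_ne_zero_iff.mpr (expV_ne_zero b s))

end helpers

/-- If `p'(t)` is a positive multiple of `p(u)` and
`p'(u)/|p'(u)| = α·p(u)/|p(u)| + β·p(t)/|p(t)|`, then `|α| ≤ ((C+c)/c)·|β|`. -/
theorem polarParam_alpha_beta [CompleteSpace X] (b : Module.Basis (Fin 2) ℝ X)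
    (t u α β lam : ℝ)
    (ht : DifferentiableAt ℝ (polarParam b) t)
    (hu : DifferentiableAt ℝ (polarParam b) u)
    (hlam : 0 < lam)
    (hpar : deriv (polarParam b) t = lam • polarParam b u)
    (heq : (euclNorm b (deriv (polarParam b) u))⁻¹ • deriv (polarParam b) u =
        α • ((euclNorm b (polarParam b u))⁻¹ • polarParam b u) +
        β • ((euclNorm b (polarParam b t))⁻¹ • polarParam b t)) :
    |α| ≤ ((CConst b + cConst b) / cConst b) * |β| := by
  have hc := cConst_pos b
  have hC0 : (0:ℝ) ≤ CConst b :=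
    le_trans (norm_nonneg (b 0)) (norm_le_CConst b (euclNorm_basis0 b))
  have hnorm : ∀ x, ‖polarParam b x‖ = 1 := norm_polarParam b
  have hpu0 : polarParam b u ≠ 0 := by
    intro h
    have := hnorm u
    rw [h, norm_zero] at this
    norm_num at this
  have hpt0 : polarParam b t ≠ 0 := by
    intro h
    have := hnorm t
    rw [h, norm_zero] at this
    norm_num at this
  set A := euclNorm b (polarParam b u) with hAdef
  set B := euclNorm b (polarParam b t) with hBdef
  have hA : 0 < A := euclNorm_pos b hpu0
  have hB : 0 < B := euclNorm_pos b hpt0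
  have hcA : cConst b ≤ A⁻¹ := by
    have h1 : euclNorm b (A⁻¹ • polarParam b u) = 1 := by
      rw [euclNorm_smul, abs_of_pos (inv_pos.mpr hA), ← hAdef, inv_mul_cancel₀ hA.ne']
    have h2 := cConst_le_norm b h1
    rwa [norm_smul, Real.norm_eq_abs, abs_of_pos (inv_pos.mpr hA), hnorm u, mul_one] at h2
  have hBC : B⁻¹ ≤ CConst b := by
    have h1 : euclNorm b (B⁻¹ • polarParam b t) = 1 := by
      rw [euclNorm_smul, abs_of_pos (inv_pos.mpr hB), ← hBdef, inv_mul_cancel₀ hB.ne']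
    have h2 := norm_le_CConst b h1
    rwa [norm_smul, Real.norm_eq_abs, abs_of_pos (inv_pos.mpr hB), hnorm t, mul_one] at h2
  -- p u is not a scalar multiple of p t
  have hns : ∀ μ : ℝ, polarParam b u ≠ μ • polarParam b t := by
    intro μ hμ
    have hv : deriv (polarParam b) t = (lam * μ) • polarParam b t + (0:X) := by
      rw [hpar, hμ, smul_smul, add_zero]
    have htan := tangent_bound hnorm ht.hasDerivAt hv
    rw [norm_zero] at htan
    have hμ0 : lam * μ = 0 := abs_eq_zero.mp (le_antisymm htan (abs_nonneg _))
    have : μ = 0 := by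
      rcases mul_eq_zero.mp hμ0 with h | h
      · exact absurd h hlam.ne'
      · exact h
    rw [this, zero_smul] at hμ
    exact hpu0 hμ
  by_cases h0 : deriv (polarParam b) u = 0
  · have heq0 : (0:X) = α • (A⁻¹ • polarParam b u) + β • (B⁻¹ • polarParam b t) := by
      rw [h0, smul_zero] at heq
      exact heq
    have hα : α = 0 := by
      by_contra hα
      have hne : α * A⁻¹ ≠ 0 := mul_ne_zero hα (inv_pos.mpr hA).ne'
      apply hns ((α * A⁻¹)⁻¹ * (-(β * B⁻¹)))
      have h2 : (α * A⁻¹) • polarParam b u = (-(β * B⁻¹)) • polarParam b t := by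
        have h3 := heq0
        rw [smul_smul, smul_smul] at h3
        rw [neg_smul]
        linear_combination (norm := module) -h3
      calc polarParam b u = ((α * A⁻¹)⁻¹ * (α * A⁻¹)) • polarParam b u := by
            rw [inv_mul_cancel₀ hne, one_smul]
        _ = (α * A⁻¹)⁻¹ • ((α * A⁻¹) • polarParam b u) := by rw [smul_smul]
        _ = (α * A⁻¹)⁻¹ • ((-(β * B⁻¹)) • polarParam b t) := by rw [h2]
        _ = ((α * A⁻¹)⁻¹ * (-(β * B⁻¹))) • polarParam b t := by rw [smul_smul]
    rw [hα, abs_zero]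
    positivity
  · set N := euclNorm b (deriv (polarParam b) u) with hNdef
    have hN : 0 < N := euclNorm_pos b h0
    have hv : deriv (polarParam b) u =
        (N * (α * A⁻¹)) • polarParam b u + (N * (β * B⁻¹)) • polarParam b t := by
      calc deriv (polarParam b) u = N • (N⁻¹ • deriv (polarParam b) u) := by
            rw [smul_smul, mul_inv_cancel₀ hN.ne', one_smul]
        _ = N • (α • (A⁻¹ • polarParam b u) + β • (B⁻¹ • polarParam b t)) := by rw [heq]
        _ = _ := by module
    have htan := tangent_bound hnorm hu.hasDerivAt hv
    rw [norm_smul, Real.norm_eq_abs, hnorm t, mul_one, abs_mul, abs_mul, abs_mul, abs_mul,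
      abs_of_pos hN, abs_of_pos (inv_pos.mpr hA), abs_of_pos (inv_pos.mpr hB)] at htan
    have htan2 : |α| * A⁻¹ ≤ |β| * B⁻¹ := le_of_mul_le_mul_left (by linarith [htan]) hN
    rw [div_mul_eq_mul_div, le_div_iff₀ hc]
    nlinarith [mul_nonneg (abs_nonneg α) (sub_nonneg.mpr hcA),
      mul_nonneg (abs_nonneg β) (sub_nonneg.mpr hBC),
      mul_nonneg (abs_nonneg β) hc.le]

end
end
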